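/- Let L(α) = m(ln α − ln(α + s)) + t/(α + s) with s > 0, m > 0, t ≥ 0, defined for α > 0. If η := t − m s > 0, then α* = m s²/η is the unique global maximizer of L on (0, ∞). -/

import Mathlib

noncomputable def L (m s t α : ℝ) : ℝ :=
  m * (Real.log α - Real.log (α + s)) + t / (α + s)

theorem unique_global_max (m s t : ℝ) (hm : 0 < m) (hs : 0 < s) (ht : 0 ≤ t)
    (hη : 0 < t - m * s) :
    ∀ α : ℝ, 0 < α → α ≠ m * s ^ 2 / (t - m * s) →
      L m s t α < L m s t (m * s ^ 2 / (t - m * s)) := by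
  intro α hα hne
  have hms : 0 < m * s := mul_pos hm hs
  have ht' : 0 < t := by linarith
  have hη' : 0 < t - m * s := hη
  have hαs : 0 < α + s := by linarith
  set β := m * s ^ 2 / (t - m * s) with hβ
  have hβpos : 0 < β := div_pos (by positivity) hη
  have hβs : β + s = s * t / (t - m * s) := by
    rw [hβ]; field_simp; ring
  have hβspos : 0 < β + s := by linarith
  set v := α * t / ((α + s) * (m * s)) with hv_def
  have hv : 0 < v := by positivity
  have hv1 : v ≠ 1 := by
    intro h
    apply hne
    have h2 : α * t = (α + s) * (m * s) := by
      rw [hv_def, div_eq_one_iff_eq (by positivity)] at h; linarith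
    have h3 : α * (t - m * s) = m * s ^ 2 := by nlinarith
    rw [hβ, eq_div_iff (ne_of_gt hη)]
    linarith
  have hlog := Real.log_lt_sub_one_of_pos hv hv1
  have hlogβ : Real.log β - Real.log (β + s) = Real.log (m * s) - Real.log t := by
    have hq : β / (β + s) = m * s / t := by
      rw [hβ, hβs]; field_simp
    have := Real.log_div (ne_of_gt hβpos) (ne_of_gt hβspos)
    rw [← this, hq, Real.log_div (ne_of_gt hms) (ne_of_gt ht')]
  have hlogv : Real.log v =
      Real.log α + Real.log t - Real.log (α + s) - Real.log (m * s) := by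
    rw [hv_def, Real.log_div (by positivity) (by positivity),
      Real.log_mul (ne_of_gt hα) (ne_of_gt ht'),
      Real.log_mul (ne_of_gt hαs) (ne_of_gt hms)]
    ring
  have hrat : t / (β + s) - t / (α + s) = m * (v - 1) := by
    rw [hβs, hv_def]
    field_simp
    ring
  have key : L m s t β - L m s t α = m * (v - 1 - Real.log v) := by
    unfold L
    have : m * (Real.log β - Real.log (β + s)) - m * (Real.log α - Real.log (α + s))
        = m * (- Real.log v) := by
      rw [hlogβ, hlogv]; ring
    nlinarith [hrat, this]
  nlinarith [key, hlog, hm]
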